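/- A monad T with an iteration operator † satisfying unfolding, naturality, uniformity, and the Bekić identity also satisfies the codiagonal axiom: for every k : X → T((Y + X) + X), (T[id, inr] ∘ k)† = (k†)†. -/

import Mathlib

open CategoryTheory Limits

variable {C : Type*} [Category C] [HasBinaryCoproducts C]

/-- Kleisli extension of a monad. -/
def kl (T : Monad C) {X Y : C} (f : X ⟶ T.obj Y) : T.obj X ⟶ T.obj Y :=
  T.map f ≫ T.μ.app Y

lemma eta_kl (T : Monad C) {A B : C} (f : A ⟶ T.obj B) : T.η.app A ≫ kl T f = f := by
  simp [kl, ← T.η.naturality_assoc]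

/-- A monad with an iteration operator satisfying unfolding, naturality, uniformity
and the Bekić identity also satisfies the codiagonal axiom. -/
theorem codiagonal_of_bekic (T : Monad C)
    (iter : ∀ {X Y : C}, (X ⟶ T.obj (Y ⨿ X)) → (X ⟶ T.obj Y))
    (unfolding : ∀ {X Y : C} (f : X ⟶ T.obj (Y ⨿ X)),
      f ≫ kl T (coprod.desc (T.η.app Y) (iter f)) = iter f)
    (naturality : ∀ {X Y Z : C} (f : X ⟶ T.obj (Y ⨿ X)) (g : Y ⟶ T.obj Z),
      iter f ≫ kl T g =
        iter (f ≫ kl T (coprod.desc (g ≫ T.map coprod.inl) (coprod.inr ≫ T.η.app (Z ⨿ X)))))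
    (uniformity : ∀ {X Y Z : C} (f : X ⟶ T.obj (Y ⨿ X)) (g : Z ⟶ T.obj (Y ⨿ Z)) (h : Z ⟶ X),
      h ≫ f = g ≫ T.map (coprod.map (𝟙 Y) h) → h ≫ iter f = iter g)
    (bekic : ∀ {X Y Z : C} (g : X ⟶ T.obj ((Z ⨿ Y) ⨿ X)) (f : Y ⟶ T.obj ((Z ⨿ Y) ⨿ X)),
      iter (coprod.desc f g ≫ T.map (coprod.associator Z Y X).hom) =
        coprod.desc (coprod.inr ≫ T.η.app (Z ⨿ Y)) (iter g) ≫
          kl T (coprod.desc (T.η.app Z)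
            (iter (f ≫ kl T (coprod.desc (T.η.app (Z ⨿ Y)) (iter g))))))
    {X Y : C} (k : X ⟶ T.obj ((Y ⨿ X) ⨿ X)) :
    iter (k ≫ T.map (coprod.desc (𝟙 (Y ⨿ X)) coprod.inr)) = iter (iter k) := by
  have hb := bekic k k
  rw [unfolding k] at hb
  -- uniformity with the codiagonal
  have hu : coprod.desc (𝟙 X) (𝟙 X) ≫ iter (k ≫ T.map (coprod.desc (𝟙 (Y ⨿ X)) coprod.inr))
      = iter (coprod.desc k k ≫ T.map (coprod.associator Y X X).hom) := by
    apply uniformity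
    apply coprod.hom_ext <;> simp only [coprod.inl_desc_assoc, coprod.inr_desc_assoc, Category.id_comp, Category.assoc, ← T.map_comp] <;> congr 2 <;> ext
    all_goals simp [coprod.inl_desc, coprod.inr_desc]
  have hl := congrArg (fun m => coprod.inl ≫ m) (hu.trans hb)
  simp only [coprod.inl_desc_assoc, Category.id_comp, Category.assoc] at hl
  rw [eta_kl, coprod.inr_desc] at hl
  exact hl
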